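/- Let π = σ_L ∘ ⋯ ∘ σ₁ be a composition of L permutations of ℕ, where each σ_j ∈ {γ₀, γ₁, γ₂, γ₀⁻¹, γ₁⁻¹, γ₂⁻¹}. Then π is the identity permutation of ℕ if and only if π(n) = n for every natural number n with n ≤ 2L + 3. Equivalently: π is not the identity if and only if there exists n ≤ 2L + 3 with π(n) ≠ n. -/

import Mathlib

/-- γ₀ = ∏ (3n | 3n+1 | 3n+2): adds 1 except on numbers ≡ 2 mod 3, which drop by 2. -/
def gamma0 : ℕ → ℕ := fun m => if m % 3 = 2 then m - 2 else m + 1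

/-- γ₁ = ∏ (3n+1 | 3n+2 | 3n+3): fixes 0. -/
def gamma1 : ℕ → ℕ :=
  fun m => if m = 0 then 0 else if m % 3 = 0 then m - 2 else m + 1

/-- γ₂ = ∏ (3n+2 | 3n+3 | 3n+4): fixes 0 and 1. -/
def gamma2 : ℕ → ℕ :=
  fun m => if m ≤ 1 then m else if m % 3 = 1 then m - 2 else m + 1

/-- γ₀⁻¹. -/
def gamma0inv : ℕ → ℕ := fun m => if m % 3 = 0 then m + 2 else m - 1

/-- γ₁⁻¹. -/
def gamma1inv : ℕ → ℕ :=
  fun m => if m = 0 then 0 else if m % 3 = 1 then m + 2 else m - 1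

/-- γ₂⁻¹. -/
def gamma2inv : ℕ → ℕ :=
  fun m => if m ≤ 1 then m else if m % 3 = 2 then m + 2 else m - 1

/-- The six generators γ₀, γ₁, γ₂, γ₀⁻¹, γ₁⁻¹, γ₂⁻¹. -/
def gammaGens : Set (ℕ → ℕ) :=
  {gamma0, gamma1, gamma2, gamma0inv, gamma1inv, gamma2inv}

lemma gen_lower {f : ℕ → ℕ} (hf : f ∈ gammaGens) (m : ℕ) : m ≤ f m + 2 := by
  simp only [gammaGens, Set.mem_insert_iff, Set.mem_singleton_iff] at hf
  rcases hf with h|h|h|h|h|h <;> subst h <;>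
    simp only [gamma0, gamma1, gamma2, gamma0inv, gamma1inv, gamma2inv] <;>
    split_ifs <;> first | omega | contradiction

lemma gen_shift {f : ℕ → ℕ} (hf : f ∈ gammaGens) (m : ℕ) (hm : 2 ≤ m) :
    f (m + 3) = f m + 3 := by
  simp only [gammaGens, Set.mem_insert_iff, Set.mem_singleton_iff] at hf
  rcases hf with h|h|h|h|h|h <;> subst h <;>
    simp only [gamma0, gamma1, gamma2, gamma0inv, gamma1inv, gamma2inv] <;>
    split_ifs <;> first | omega | contradiction

lemma fold_lower : ∀ (l : List (ℕ → ℕ)), (∀ f ∈ l, f ∈ gammaGens) → ∀ m : ℕ,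
    m ≤ l.foldr (· ∘ ·) id m + 2 * l.length
  | [], _, m => by simp
  | f :: t, hl, m => by
    have h1 := fold_lower t (fun g hg => hl g (List.mem_cons_of_mem _ hg)) m
    have h2 := gen_lower (hl f List.mem_cons_self) (t.foldr (· ∘ ·) id m)
    simp only [List.foldr_cons, Function.comp_apply, List.length_cons]
    omega

lemma fold_shift : ∀ (l : List (ℕ → ℕ)), (∀ f ∈ l, f ∈ gammaGens) → ∀ m : ℕ,
    2 * l.length ≤ m → l.foldr (· ∘ ·) id (m + 3) = l.foldr (· ∘ ·) id m + 3
  | [], _, m, _ => rfl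
  | f :: t, hl, m, hm => by
    have ht : ∀ g ∈ t, g ∈ gammaGens := fun g hg => hl g (List.mem_cons_of_mem _ hg)
    simp only [List.length_cons] at hm
    have h1 := fold_shift t ht m (by omega)
    have h2 := fold_lower t ht m
    have h3 := gen_shift (hl f List.mem_cons_self) (t.foldr (· ∘ ·) id m)
      (by omega)
    simp only [List.foldr_cons, Function.comp_apply]
    rw [h1, h3]

theorem statement17 (l : List (ℕ → ℕ)) (hl : ∀ f ∈ l, f ∈ gammaGens) :
    l.foldr (· ∘ ·) id = id ↔
      ∀ n : ℕ, n ≤ 2 * l.length + 3 → (l.foldr (· ∘ ·) id) n = n := by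
  constructor
  · intro h n _
    rw [h]; rfl
  · intro h
    funext n
    induction n using Nat.strong_induction_on with
    | _ n ih =>
      by_cases hn : n ≤ 2 * l.length + 3
      · exact h n hn
      · have h3 : n = (n - 3) + 3 := by omega
        have hs := fold_shift l hl (n - 3) (by omega)
        have hfix : l.foldr (· ∘ ·) id (n - 3) = n - 3 := ih (n - 3) (by omega)
        show l.foldr (· ∘ ·) id n = n
        rw [h3, hs, hfix]
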